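/- arXiv:1801.08250 — 2 statements merged into one kernel-verified Lean document; each statement's English description precedes it below -/
import Mathlib

section
/- Let n ≥ 2, λ > 1/(n−1), μ < 0, and let f be the global solution on [0,∞) of f'' + ((n-1)/r)(1+f'²)f' = (1/λ)(1+f'²)²/(r f' − f) with f(0) = μ, f'(0) = 0 and r f'(r) > f(r) for all r ≥ 0. Then for every β with 1 < β < λ(n−1)/(λ(n−1)−1) there exist constants C > 0 and R > 0 such that f(r) ≥ C r^β for all r ≥ R. -/
open Set Filter intervalIntegral Real
open Topology

set_option maxHeartbeats 1600000

/-- `f` is a global `C¹([0,∞)) ∩ C²((0,∞))` solution of the radially symmetric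
self-similar inverse mean curvature flow ODE
`f'' + ((n-1)/r)(1+f'²)f' = (1/λ)(1+f'²)²/(r f' - f)`
with `f(0) = μ`, `f'(0) = 0` and `r f'(r) - f(r) > 0` on `[0,∞)`. -/
def IsIMCFSolGlobal (n : ℕ) (lam mu : ℝ) (f : ℝ → ℝ) : Prop :=
  ContinuousOn f (Set.Ici 0) ∧
  ContinuousOn (deriv f) (Set.Ici 0) ∧
  (∀ r ∈ Set.Ioi (0 : ℝ), DifferentiableAt ℝ f r) ∧
  (∀ r ∈ Set.Ioi (0 : ℝ), DifferentiableAt ℝ (deriv f) r) ∧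
  ContinuousOn (deriv (deriv f)) (Set.Ioi 0) ∧
  (∀ r ∈ Set.Ioi (0 : ℝ),
    deriv (deriv f) r + ((n : ℝ) - 1) / r * (1 + (deriv f r) ^ 2) * deriv f r
      = 1 / lam * (1 + (deriv f r) ^ 2) ^ 2 / (r * deriv f r - f r)) ∧
  f 0 = mu ∧ deriv f 0 = 0 ∧
  (∀ r ∈ Set.Ici (0 : ℝ), r * deriv f r - f r > 0)

theorem aux_deriv_nonpos_left {g : ℝ → ℝ} {a c : ℝ} (hac : a < c)
    (hd : DifferentiableAt ℝ g c) (hmin : ∀ r ∈ Ico a c, g c ≤ g r) :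
    deriv g c ≤ 0 := by
  have h := hd.hasDerivAt
  rw [hasDerivAt_iff_tendsto_slope] at h
  have h' : Tendsto (slope g c) (𝓝[<] c) (𝓝 (deriv g c)) :=
    h.mono_left (nhdsWithin_mono _ fun x hx => ne_of_lt hx)
  refine le_of_tendsto h' ?_
  filter_upwards [Ioo_mem_nhdsLT hac] with r hr
  have h1 : 0 ≤ g r - g c := sub_nonneg.2 (hmin r ⟨le_of_lt hr.1, hr.2⟩)
  have h2 : r - c < 0 := sub_neg.2 hr.2
  rw [slope_def_field]
  exact div_nonpos_of_nonneg_of_nonpos h1 h2.le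

theorem aux_pos_of_deriv_pos {g : ℝ → ℝ} {a b : ℝ} (hab : a < b)
    (hc : ContinuousOn g (Icc a b)) (hd : ∀ r ∈ Ioc a b, DifferentiableAt ℝ g r)
    (h0 : 0 ≤ g a) (key : ∀ r ∈ Ioc a b, g r ≤ 0 → 0 < deriv g r) :
    0 < g b := by
  by_contra hgb
  push_neg at hgb
  obtain ⟨c, hc1, hc2⟩ := (isCompact_Icc).exists_isMinOn (nonempty_Icc.2 hab.le) hc
  rcases eq_or_lt_of_le hc1.1 with h | h
  · -- c = a : min value is g a ≥ 0, so g b = 0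
    have hmin : ∀ r ∈ Icc a b, g a ≤ g r := by
      intro r hr; have := hc2 hr; rwa [← h] at this
    have hgb0 : g b = 0 := le_antisymm hgb (h0.trans (hmin b ⟨hab.le, le_rfl⟩))
    have hk := key b ⟨hab, le_rfl⟩ (le_of_eq hgb0)
    have := aux_deriv_nonpos_left hab (hd b ⟨hab, le_rfl⟩)
      (fun r hr => hgb0 ▸ (h0.trans (hmin r ⟨hr.1, hr.2.le⟩)))
    linarith
  · have hcIoc : c ∈ Ioc a b := ⟨h, hc1.2⟩
    have hgc : g c ≤ 0 := le_trans (hc2 ⟨hab.le, le_rfl⟩) hgb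
    have hk := key c hcIoc hgc
    have := aux_deriv_nonpos_left h (hd c hcIoc)
      (fun r hr => hc2 ⟨hr.1, hr.2.le.trans hc1.2⟩)
    linarith

theorem aux_pos_of_deriv_pos_at_zeros {g : ℝ → ℝ} {a b : ℝ} (hab : a < b)
    (hc : ContinuousOn g (Icc a b)) (hd : ∀ r ∈ Ioc a b, DifferentiableAt ℝ g r)
    (h0 : 0 < g a) (key : ∀ r ∈ Ioc a b, g r = 0 → 0 < deriv g r) :
    0 < g b := by
  by_contra hgb
  push_neg at hgb
  set S : Set ℝ := Icc a b ∩ g ⁻¹' (Iic 0) with hS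
  have hSne : S.Nonempty := ⟨b, ⟨hab.le, le_rfl⟩, hgb⟩
  have hScl : IsClosed S := hc.preimage_isClosed_of_isClosed isClosed_Icc isClosed_Iic
  have hSbd : BddBelow S := ⟨a, fun x hx => hx.1.1⟩
  set c := sInf S with hcdef
  have hcS : c ∈ S := hScl.csInf_mem hSne hSbd
  have hca : a < c := by
    rcases eq_or_lt_of_le hcS.1.1 with h | h
    · exfalso; have : g c ≤ 0 := hcS.2; rw [← h] at this; linarith
    · exact h
  have hgpos : ∀ r ∈ Ico a c, 0 < g r := by
    intro r hr
    by_contra hgr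
    push_neg at hgr
    have : r ∈ S := ⟨⟨hr.1, hr.2.le.trans hcS.1.2⟩, hgr⟩
    have := csInf_le hSbd this
    exact absurd this (not_le.2 hr.2)
  -- g c ≥ 0 from left limit
  have hgc0 : g c = 0 := by
    refine le_antisymm hcS.2 ?_
    have hcont : ContinuousWithinAt g (Icc a b) c := hc c hcS.1
    have h' : Tendsto g (𝓝[Ioo a c] c) (𝓝 (g c)) :=
      hcont.tendsto.mono_left (nhdsWithin_mono _
        (fun x hx => ⟨hx.1.le, hx.2.le.trans hcS.1.2⟩))
    have hne : (𝓝[Ioo a c] c).NeBot := by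
      rw [← mem_closure_iff_nhdsWithin_neBot, closure_Ioo hca.ne]
      exact ⟨hca.le, le_rfl⟩
    exact ge_of_tendsto h' (eventually_of_mem self_mem_nhdsWithin
      (fun r hr => (hgpos r ⟨hr.1.le, hr.2⟩).le))
  have hk := key c ⟨hca, hcS.1.2⟩ hgc0
  have := aux_deriv_nonpos_left hca (hd c ⟨hca, hcS.1.2⟩)
    (fun r hr => hgc0 ▸ (hgpos r hr).le)
  linarith

/-- growth helper -/
theorem aux_grow {g : ℝ → ℝ} {m x : ℝ}
    (hc : ContinuousOn g (Ici x)) (hd : ∀ s ∈ Ioi x, DifferentiableAt ℝ g s)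
    (hm : ∀ s ∈ Ioi x, m ≤ deriv g s) : ∀ y, x ≤ y → g x + m * (y - x) ≤ g y := by
  intro y hy
  have hmono : MonotoneOn (fun s => g s - m * s) (Ici x) := by
    apply monotoneOn_of_deriv_nonneg (convex_Ici x)
    · exact hc.sub ((continuous_const.mul continuous_id).continuousOn)
    · intro s hs
      rw [interior_Ici] at hs
      have h1 : HasDerivAt (fun t => m * t) m s := by
        simpa using (hasDerivAt_id s).const_mul m
      exact ((hd s hs).sub h1.differentiableAt).differentiableWithinAt
    · intro s hs
      rw [interior_Ici] at hs
      have h1 : HasDerivAt (fun t => m * t) m s := by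
        simpa using (hasDerivAt_id s).const_mul m
      have h2 : HasDerivAt (fun t => g t - m * t) (deriv g s - m) s :=
        (hd s hs).hasDerivAt.sub h1
      rw [h2.deriv]
      linarith [hm s hs]
  have := hmono (self_mem_Ici) (mem_Ici.2 hy) hy
  simp only at this
  linarith

theorem imcf_key3 (n : ℕ) (lam : ℝ) (f : ℝ → ℝ)
    (hlam0 : 0 < lam)
    (hdf : ∀ r ∈ Set.Ioi (0:ℝ), DifferentiableAt ℝ f r)
    (hdp : ∀ r ∈ Set.Ioi (0:ℝ), DifferentiableAt ℝ (deriv f) r)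
    (hode : ∀ r ∈ Set.Ioi (0:ℝ),
      deriv (deriv f) r + ((n : ℝ) - 1) / r * (1 + (deriv f r) ^ 2) * deriv f r
        = 1 / lam * (1 + (deriv f r) ^ 2) ^ 2 / (r * deriv f r - f r))
    (hw : ∀ r ∈ Set.Ici (0:ℝ), r * deriv f r - f r > 0)
    (hn1 : (1:ℝ) ≤ (n:ℝ) - 1) :
    ∀ r ∈ Set.Ioi (0:ℝ), DifferentiableAt ℝ (deriv (deriv f)) r ∧
      (deriv (deriv f) r = 0 → 0 < deriv f r → 0 < deriv (deriv (deriv f)) r) := by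
  intro r hr
  have hr0 : (0:ℝ) < r := hr
  have hwr : 0 < r * deriv f r - f r := hw r hr0.le
  have hfd : HasDerivAt f (deriv f r) r := (hdf r hr).hasDerivAt
  have hpd : HasDerivAt (deriv f) (deriv (deriv f) r) r := (hdp r hr).hasDerivAt
  have hsq : HasDerivAt (fun s => 1 + deriv f s ^ 2)
      (2 * deriv f r * deriv (deriv f) r) r := by
    simpa [pow_one] using ((hpd.pow 2).const_add 1)
  have hN : HasDerivAt (fun s => 1 / lam * (1 + deriv f s ^ 2) ^ 2)
      (1 / lam * (2 * (1 + deriv f r ^ 2) * (2 * deriv f r * deriv (deriv f) r))) r := by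
    have := (hsq.pow 2).const_mul (1 / lam)
    simpa [pow_one, mul_assoc, mul_comm, mul_left_comm] using this
  have hwd : HasDerivAt (fun s => s * deriv f s - f s) (r * deriv (deriv f) r) r := by
    have h := ((hasDerivAt_id r).mul hpd).sub hfd
    exact h.congr_deriv (by simp only [id_eq]; ring)
  have hG : HasDerivAt (fun s => 1 / lam * (1 + deriv f s ^ 2) ^ 2 / (s * deriv f s - f s))
      ((1 / lam * (2 * (1 + deriv f r ^ 2) * (2 * deriv f r * deriv (deriv f) r)) *
          (r * deriv f r - f r) -
        1 / lam * (1 + deriv f r ^ 2) ^ 2 * (r * deriv (deriv f) r)) /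
        (r * deriv f r - f r) ^ 2) r := hN.div hwd (ne_of_gt hwr)
  have hu : HasDerivAt (fun s => ((n:ℝ) - 1) / s) (-(((n:ℝ) - 1) / r ^ 2)) r := by
    have := (hasDerivAt_inv (ne_of_gt hr0)).const_mul ((n:ℝ) - 1)
    simpa [div_eq_mul_inv, mul_comm, mul_left_comm, mul_assoc] using this
  have huv : HasDerivAt (fun s => ((n:ℝ) - 1) / s * (1 + deriv f s ^ 2))
      (-(((n:ℝ) - 1) / r ^ 2) * (1 + deriv f r ^ 2) +
        ((n:ℝ) - 1) / r * (2 * deriv f r * deriv (deriv f) r)) r := hu.mul hsq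
  have hH : HasDerivAt (fun s => ((n:ℝ) - 1) / s * (1 + deriv f s ^ 2) * deriv f s)
      ((-(((n:ℝ) - 1) / r ^ 2) * (1 + deriv f r ^ 2) +
          ((n:ℝ) - 1) / r * (2 * deriv f r * deriv (deriv f) r)) * deriv f r +
        ((n:ℝ) - 1) / r * (1 + deriv f r ^ 2) * deriv (deriv f) r) r := huv.mul hpd
  have hGH := hG.sub hH
  have heq : deriv (deriv f) =ᶠ[𝓝 r]
      (fun s => 1 / lam * (1 + deriv f s ^ 2) ^ 2 / (s * deriv f s - f s) -
        ((n:ℝ) - 1) / s * (1 + deriv f s ^ 2) * deriv f s) := by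
    filter_upwards [isOpen_Ioi.mem_nhds hr] with s hs
    have := hode s hs
    linarith
  constructor
  · exact heq.differentiableAt_iff.2 hGH.differentiableAt
  · intro hd20 hppos
    have h5 : deriv (deriv (deriv f)) r =
        ((1 / lam * (2 * (1 + deriv f r ^ 2) * (2 * deriv f r * deriv (deriv f) r)) *
            (r * deriv f r - f r) -
          1 / lam * (1 + deriv f r ^ 2) ^ 2 * (r * deriv (deriv f) r)) /
          (r * deriv f r - f r) ^ 2) -
        ((-(((n:ℝ) - 1) / r ^ 2) * (1 + deriv f r ^ 2) +
            ((n:ℝ) - 1) / r * (2 * deriv f r * deriv (deriv f) r)) * deriv f r +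
          ((n:ℝ) - 1) / r * (1 + deriv f r ^ 2) * deriv (deriv f) r) := by
      rw [heq.deriv_eq]; exact hGH.deriv
    rw [h5, hd20]
    have hkey : (0:ℝ) < ((n:ℝ) - 1) / r ^ 2 * (1 + deriv f r ^ 2) * deriv f r := by
      apply mul_pos (mul_pos (div_pos (by linarith) (by positivity)) (by positivity)) hppos
    have heq2 : ((1 / lam * (2 * (1 + deriv f r ^ 2) * (2 * deriv f r * 0)) *
            (r * deriv f r - f r) -
          1 / lam * (1 + deriv f r ^ 2) ^ 2 * (r * 0)) /
          (r * deriv f r - f r) ^ 2) -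
        ((-(((n:ℝ) - 1) / r ^ 2) * (1 + deriv f r ^ 2) +
            ((n:ℝ) - 1) / r * (2 * deriv f r * 0)) * deriv f r +
          ((n:ℝ) - 1) / r * (1 + deriv f r ^ 2) * 0) =
        ((n:ℝ) - 1) / r ^ 2 * (1 + deriv f r ^ 2) * deriv f r := by
      field_simp
      ring
    rw [heq2]
    exact hkey

theorem imcf_fp_pos (n : ℕ) (lam : ℝ) (f : ℝ → ℝ)
    (hlam0 : 0 < lam)
    (hcp : ContinuousOn (deriv f) (Set.Ici 0))
    (hdp : ∀ r ∈ Set.Ioi (0:ℝ), DifferentiableAt ℝ (deriv f) r)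
    (hode : ∀ r ∈ Set.Ioi (0:ℝ),
      deriv (deriv f) r + ((n : ℝ) - 1) / r * (1 + (deriv f r) ^ 2) * deriv f r
        = 1 / lam * (1 + (deriv f r) ^ 2) ^ 2 / (r * deriv f r - f r))
    (hw : ∀ r ∈ Set.Ici (0:ℝ), r * deriv f r - f r > 0)
    (hp00 : deriv f 0 = 0)
    (hn1 : (1:ℝ) ≤ (n:ℝ) - 1) :
    ∀ r ∈ Set.Ioi (0:ℝ), 0 < deriv f r := by
  intro r₀ hr₀
  have hr₀0 : (0:ℝ) < r₀ := hr₀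
  apply aux_pos_of_deriv_pos hr₀0
  · exact hcp.mono (Icc_subset_Ici_self)
  · exact fun r hr => hdp r hr.1
  · rw [hp00]
  · intro r hr hple
    have hrI : r ∈ Set.Ioi (0:ℝ) := hr.1
    have hwr : 0 < r * deriv f r - f r := hw r hr.1.le
    have h1 : 0 < 1 / lam * (1 + (deriv f r) ^ 2) ^ 2 / (r * deriv f r - f r) := by
      apply div_pos (by positivity) hwr
    have h2 : ((n:ℝ) - 1) / r * (1 + (deriv f r) ^ 2) * deriv f r ≤ 0 := by
      apply mul_nonpos_of_nonneg_of_nonpos _ hple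
      have : 0 < r := hr.1
      positivity
    have := hode r hrI
    linarith

theorem imcf_d2_event_pos (n : ℕ) (lam mu : ℝ) (f : ℝ → ℝ)
    (hlam0 : 0 < lam) (hn1 : (1:ℝ) ≤ (n:ℝ) - 1)
    (hf : IsIMCFSolGlobal n lam mu f) :
    ∃ a : ℝ, 0 < a ∧ ∀ r ∈ Set.Ioi a, 0 < deriv (deriv f) r := by
  obtain ⟨hcf, hcp, hdf, hdp, hcd2, hode, hf0, hp00, hw⟩ := hf
  have hfp := imcf_fp_pos n lam f hlam0 hcp hdp hode hw hp00 hn1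
  have hkey3 := imcf_key3 n lam f hlam0 hdf hdp hode hw hn1
  -- derivative of w
  have hwd : ∀ s ∈ Set.Ioi (0:ℝ), HasDerivAt (fun t => t * deriv f t - f t)
      (s * deriv (deriv f) s) s := by
    intro s hs
    have h := ((hasDerivAt_id s).mul (hdp s hs).hasDerivAt).sub (hdf s hs).hasDerivAt
    exact h.congr_deriv (by simp only [id_eq]; ring)
  -- Step 1: d2 positive somewhere
  have step1 : ∃ a : ℝ, 0 < a ∧ 0 < deriv (deriv f) a := by
    by_contra hcon
    push_neg at hcon
    have hd2np : ∀ s ∈ Set.Ioi (1:ℝ), deriv (deriv f) s ≤ 0 := fun s hs =>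
      hcon s (lt_trans one_pos hs)
    have hpm : AntitoneOn (deriv f) (Set.Ici 1) := by
      apply antitoneOn_of_deriv_nonpos (convex_Ici 1)
      · exact hcp.mono (Ici_subset_Ici.2 zero_le_one)
      · intro s hs
        rw [interior_Ici] at hs
        exact (hdp s (lt_trans one_pos hs : (0:ℝ) < s)).differentiableWithinAt
      · intro s hs
        rw [interior_Ici] at hs
        exact hd2np s hs
    have hwm : AntitoneOn (fun t => t * deriv f t - f t) (Set.Ici 1) := by
      apply antitoneOn_of_deriv_nonpos (convex_Ici 1)
      · exact ((continuousOn_id.mul hcp).sub hcf).mono (Ici_subset_Ici.2 zero_le_one)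
      · intro s hs
        rw [interior_Ici] at hs
        exact (hwd s (lt_trans one_pos hs : (0:ℝ) < s)).differentiableAt.differentiableWithinAt
      · intro s hs
        rw [interior_Ici] at hs
        rw [(hwd s (lt_trans one_pos hs : (0:ℝ) < s)).deriv]
        exact mul_nonpos_of_nonneg_of_nonpos (by linarith [(lt_trans one_pos hs : (0:ℝ) < s)]) (hd2np s hs)
    set M := deriv f 1 with hMdef
    set W := (1:ℝ) * deriv f 1 - f 1 with hWdef
    have hM : 0 < M := hfp 1 (mem_Ioi.2 one_pos)
    have hW : 0 < W := hw 1 (mem_Ici.2 zero_le_one)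
    set r₁ := 1 + lam * W * ((n:ℝ) - 1) * (1 + M ^ 2) * M with hr₁def
    have hr₁1 : 1 ≤ r₁ := by nlinarith [mul_pos hlam0 hW, sq_nonneg M, hM, hn1, mul_pos (mul_pos (mul_pos (mul_pos hlam0 hW) (by linarith : (0:ℝ) < (n:ℝ)-1)) (by nlinarith [sq_nonneg M] : (0:ℝ) < 1 + M^2)) hM]
    have hr₁0 : (0:ℝ) < r₁ := by linarith
    have hple : deriv f r₁ ≤ M := hpm self_mem_Ici (mem_Ici.2 hr₁1) hr₁1
    have hppos : 0 < deriv f r₁ := hfp r₁ (mem_Ioi.2 hr₁0)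
    have hwle : r₁ * deriv f r₁ - f r₁ ≤ W := by
      have h := hwm self_mem_Ici (mem_Ici.2 hr₁1) hr₁1
      simpa [hWdef] using h
    have hwpos : 0 < r₁ * deriv f r₁ - f r₁ := hw r₁ (mem_Ici.2 hr₁0.le)
    have hG : 1 / (lam * W) ≤ 1 / lam * (1 + (deriv f r₁) ^ 2) ^ 2 / (r₁ * deriv f r₁ - f r₁) := by
      rw [div_le_div_iff₀ (by positivity) hwpos]
      have hexp : 1 / lam * (1 + (deriv f r₁) ^ 2) ^ 2 * (lam * W) =
          (1 + (deriv f r₁) ^ 2) ^ 2 * W := by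
        field_simp
      rw [hexp]
      have hge : (1:ℝ) ≤ (1 + (deriv f r₁) ^ 2) ^ 2 := by
        nlinarith [sq_nonneg (deriv f r₁), sq_nonneg ((deriv f r₁)^2)]
      have h1 := mul_le_mul_of_nonneg_right hge hW.le
      linarith
    have hHle : ((n:ℝ) - 1) / r₁ * (1 + (deriv f r₁) ^ 2) * deriv f r₁ ≤
        ((n:ℝ) - 1) / r₁ * ((1 + M ^ 2) * M) := by
      rw [mul_assoc]
      apply mul_le_mul_of_nonneg_left _ (by positivity)
      nlinarith [hppos, hple, hM, mul_le_mul hple hple hppos.le hM.le]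
    have hHlt : ((n:ℝ) - 1) / r₁ * ((1 + M ^ 2) * M) < 1 / (lam * W) := by
      rw [div_mul_eq_mul_div, div_lt_div_iff₀ hr₁0 (by positivity)]
      nlinarith [mul_pos hlam0 hW, mul_pos (mul_pos hlam0 hW) hM]
    have hd2r₁ := hode r₁ (mem_Ioi.2 hr₁0)
    have : 0 < deriv (deriv f) r₁ := by
      have h1 : 1 / (lam * W) ≤ deriv (deriv f) r₁ +
          ((n:ℝ) - 1) / r₁ * (1 + (deriv f r₁) ^ 2) * deriv f r₁ := by
        rw [hd2r₁]; exact hG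
      linarith
    linarith [hcon r₁ hr₁0]
  
  -- Step 2: d2 positive beyond a
  obtain ⟨a, ha0, had2⟩ := step1
  refine ⟨a, ha0, fun r hr => ?_⟩
  have har : a < r := hr
  apply aux_pos_of_deriv_pos_at_zeros har
  · exact hcd2.mono (fun s hs => lt_of_lt_of_le ha0 hs.1)
  · exact fun s hs => (hkey3 s (lt_trans ha0 hs.1)).1
  · exact had2
  · intro s hs h0
    exact (hkey3 s (lt_trans ha0 hs.1)).2 h0 (hfp s (lt_trans ha0 hs.1))

theorem imcf_fp_unbounded (n : ℕ) (lam mu : ℝ) (f : ℝ → ℝ)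
    (hlam0 : 0 < lam) (hn1 : (1:ℝ) ≤ (n:ℝ) - 1)
    (hf : IsIMCFSolGlobal n lam mu f) :
    ∀ M : ℝ, ∃ r₀ : ℝ, 0 < r₀ ∧ ∀ r, r₀ ≤ r → M ≤ deriv f r := by
  obtain ⟨hcf, hcp, hdf, hdp, hcd2, hode, hf0, hp00, hw⟩ := hf
  have hfp := imcf_fp_pos n lam f hlam0 hcp hdp hode hw hp00 hn1
  obtain ⟨a, ha0, had2⟩ := imcf_d2_event_pos n lam mu f hlam0 hn1
    ⟨hcf, hcp, hdf, hdp, hcd2, hode, hf0, hp00, hw⟩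
  have hwd : ∀ s ∈ Set.Ioi (0:ℝ), HasDerivAt (fun t => t * deriv f t - f t)
      (s * deriv (deriv f) s) s := by
    intro s hs
    have h := ((hasDerivAt_id s).mul (hdp s hs).hasDerivAt).sub (hdf s hs).hasDerivAt
    exact h.congr_deriv (by simp only [id_eq]; ring)
  have hpm : MonotoneOn (deriv f) (Set.Ici a) := by
    apply monotoneOn_of_deriv_nonneg (convex_Ici a)
    · exact hcp.mono (Ici_subset_Ici.2 ha0.le)
    · intro s hs
      rw [interior_Ici] at hs
      exact (hdp s (lt_trans ha0 hs)).differentiableWithinAt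
    · intro s hs
      rw [interior_Ici] at hs
      exact (had2 s hs).le
  by_cases hB : BddAbove (deriv f '' Set.Ici a)
  · exfalso
    set L := sSup (deriv f '' Set.Ici a) with hLdef
    have hLub : ∀ r, a ≤ r → deriv f r ≤ L := fun r hr =>
      le_csSup hB (mem_image_of_mem _ (mem_Ici.2 hr))
    have hL0 : 0 < L := lt_of_lt_of_le (hfp a (mem_Ioi.2 ha0)) (hLub a le_rfl)
    set ε := min (1/(2*lam*(((n:ℝ)-1)*L+1))) (1/4) with hεdef
    have hεpos : 0 < ε := by
      apply lt_min
      · apply div_pos one_pos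
        have : 0 < ((n:ℝ)-1)*L := mul_pos (by linarith) hL0
        positivity
      · norm_num
    have hε4 : ε ≤ 1/4 := min_le_right _ _
    have hε1 : ε ≤ 1/(2*lam*(((n:ℝ)-1)*L+1)) := min_le_left _ _
    have hnL : 0 < ((n:ℝ)-1)*L+1 := by nlinarith
    have hbr : ((n:ℝ)-1)*L + 1 ≤ 1/(2*lam*ε) := by
      rw [le_div_iff₀ (by positivity)]
      calc (((n:ℝ)-1)*L + 1) * (2*lam*ε) ≤ (((n:ℝ)-1)*L + 1) * (2*lam*(1/(2*lam*(((n:ℝ)-1)*L+1)))) := by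
            apply mul_le_mul_of_nonneg_left _ hnL.le
            apply mul_le_mul_of_nonneg_left hε1 (by positivity)
        _ = 1 := by field_simp
    obtain ⟨y0, hy0mem, hy0⟩ := exists_lt_of_lt_csSup
      (Set.Nonempty.image _ ⟨a, self_mem_Ici⟩) (show L - ε < L by linarith)
    obtain ⟨r₂, hr₂a, hr₂eq⟩ := hy0mem
    have hr₂0 : 0 < r₂ := lt_of_lt_of_le ha0 hr₂a
    have hplb : ∀ r, r₂ ≤ r → L - ε < deriv f r := by
      intro r hr
      calc L - ε < deriv f r₂ := by rw [hr₂eq]; exact hy0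
        _ ≤ deriv f r := hpm hr₂a (mem_Ici.2 (le_trans hr₂a hr)) hr
    have hflb : ∀ y, r₂ ≤ y → f r₂ + (L - ε) * (y - r₂) ≤ f y := by
      apply aux_grow
      · exact hcf.mono (Ici_subset_Ici.2 hr₂0.le)
      · exact fun s hs => hdf s (mem_Ioi.2 (lt_trans hr₂0 hs))
      · exact fun s hs => (hplb s (le_of_lt hs)).le
    set D := (L - ε) * r₂ - f r₂ with hDdef
    have hwub : ∀ r, r₂ ≤ r → r * deriv f r - f r ≤ ε * r + D := by
      intro r hr
      have h1 : r * deriv f r ≤ r * L :=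
        mul_le_mul_of_nonneg_left (hLub r (le_trans hr₂a hr)) (le_trans hr₂0.le hr)
      have h2 := hflb r hr
      nlinarith
    set r₃ := max r₂ ((|D| + 1)/ε) with hr₃def
    have hr₃r₂ : r₂ ≤ r₃ := le_max_left _ _
    have hr₃0 : 0 < r₃ := lt_of_lt_of_le hr₂0 hr₃r₂
    have hwub2 : ∀ r, r₃ ≤ r → r * deriv f r - f r ≤ 2 * ε * r := by
      intro r hr
      have h1 := hwub r (le_trans hr₃r₂ hr)
      have h2 : (|D| + 1)/ε ≤ r := le_trans (le_max_right _ _) hr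
      have h3 : |D| + 1 ≤ ε * r := by
        rw [div_le_iff₀ hεpos] at h2
        linarith [h2]
      have := le_abs_self D
      linarith
    have hd2lb : ∀ s, r₃ ≤ s → 1 ≤ s * deriv (deriv f) s := by
      intro s hs
      have hs0 : 0 < s := lt_of_lt_of_le hr₃0 hs
      have hps : 0 < deriv f s := hfp s (mem_Ioi.2 hs0)
      have hpsL : deriv f s ≤ L := hLub s (le_trans hr₂a (le_trans hr₃r₂ hs))
      have hws : 0 < s * deriv f s - f s := hw s (mem_Ici.2 hs0.le)
      have hwle : s * deriv f s - f s ≤ 2 * ε * s := hwub2 s hs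
      have hodes := hode s (mem_Ioi.2 hs0)
      set P := deriv f s with hPdef
      have hA1 : (1:ℝ) ≤ 1 + P^2 := by nlinarith [sq_nonneg P]
      -- t1 : (1+P²)*(1/(2*lam*ε)) ≤ s * (G)
      have t1 : (1 + P^2) * (1/(2*lam*ε)) ≤
          s * (1/lam * (1 + P^2)^2 / (s * P - f s)) := by
        have e1 : s * (1/lam * (1 + P^2)^2 / (s * P - f s)) =
            (s * (1 + P^2)^2 / lam) / (s * P - f s) := by ring
        have e2 : (1 + P^2) * (1/(2*lam*ε)) = (1 + P^2) / (2*lam*ε) := by ring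
        rw [e1, e2, div_le_div_iff₀ (by positivity) hws]
        have e3 : s * (1 + P^2)^2 / lam * (2*lam*ε) = (1 + P^2)^2 * (2*ε*s) := by
          field_simp
        rw [e3]
        have h5 : (1 + P^2) * (s * P - f s) ≤ (1 + P^2) * (2*ε*s) :=
          mul_le_mul_of_nonneg_left hwle (by positivity)
        have h6 : (1 + P^2) * (2*ε*s) ≤ (1 + P^2)^2 * (2*ε*s) :=
          mul_le_mul_of_nonneg_right (by nlinarith [sq_nonneg P]) (by positivity)
        linarith
      have t2 : ((n:ℝ)-1)*(1+P^2)*P ≤ ((n:ℝ)-1)*(1+P^2)*L := by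
        apply mul_le_mul_of_nonneg_left hpsL
        apply mul_nonneg (by linarith) (by positivity)
      have t3 : (1+P^2)*(((n:ℝ)-1)*L+1) ≤ (1+P^2)*(1/(2*lam*ε)) :=
        mul_le_mul_of_nonneg_left hbr (by positivity)
      have h0' : deriv (deriv f) s =
          1/lam*(1+P^2)^2/(s*P - f s) - ((n:ℝ)-1)/s*(1+P^2)*P := by
        linarith [hodes]
      have hsH : s * (((n:ℝ)-1)/s*(1+P^2)*P) = ((n:ℝ)-1)*(1+P^2)*P := by
        field_simp
      have h7 : s * deriv (deriv f) s =
          s * (1/lam*(1+P^2)^2/(s*P - f s)) - ((n:ℝ)-1)*(1+P^2)*P := by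
        rw [h0', mul_sub, hsH]
      rw [h7]
      nlinarith [t1, t2, t3, sq_nonneg P]
    -- w grows at rate ≥ 1, contradiction with w ≤ 2εr
    have hwgrow := aux_grow (g := fun t => t * deriv f t - f t) (m := 1) (x := r₃)
      (((continuousOn_id.mul hcp).sub hcf).mono (Ici_subset_Ici.2 hr₃0.le))
      (fun s hs => (hwd s (mem_Ioi.2 (lt_trans hr₃0 hs))).differentiableAt)
      (fun s hs => by
        rw [(hwd s (mem_Ioi.2 (lt_trans hr₃0 hs))).deriv]
        exact hd2lb s (le_of_lt hs))
    have h8 := hwgrow (2*r₃+1) (by linarith)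
    have h9 := hwub2 (2*r₃+1) (by linarith)
    have h10 : 0 < r₃ * deriv f r₃ - f r₃ := hw r₃ (mem_Ici.2 hr₃0.le)
    have h11 : 2*ε*(2*r₃+1) ≤ (1/2)*(2*r₃+1) := by nlinarith
    linarith
  · intro M
    rw [not_bddAbove_iff] at hB
    obtain ⟨y, ⟨x, hxa, rfl⟩, hMy⟩ := hB M
    refine ⟨max x (a+1), by positivity, fun r hr => ?_⟩
    have hxr : x ≤ r := le_trans (le_max_left _ _) hr
    have har : a ≤ r := by
      have := le_trans (le_max_right _ _) hr; linarith
    exact le_trans hMy.le (hpm hxa (mem_Ici.2 har) hxr)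

theorem imcf_q_step (n : ℕ) (lam : ℝ) (f : ℝ → ℝ)
    (hlam0 : 0 < lam) (hn1 : (1:ℝ) ≤ (n:ℝ) - 1)
    (hdf : ∀ r ∈ Set.Ioi (0:ℝ), DifferentiableAt ℝ f r)
    (hdp : ∀ r ∈ Set.Ioi (0:ℝ), DifferentiableAt ℝ (deriv f) r)
    (hode : ∀ r ∈ Set.Ioi (0:ℝ),
      deriv (deriv f) r + ((n : ℝ) - 1) / r * (1 + (deriv f r) ^ 2) * deriv f r
        = 1 / lam * (1 + (deriv f r) ^ 2) ^ 2 / (r * deriv f r - f r))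
    (hw : ∀ r ∈ Set.Ici (0:ℝ), r * deriv f r - f r > 0)
    {β ε₀ : ℝ} (hβ1 : 1 < β) (hε₀pos : 0 < ε₀)
    (hc' : lam*(β-1)*(ε₀+((n:ℝ)-1)) = β) :
    ∀ r ∈ Set.Ioi (0:ℝ), 0 < f r → 0 < deriv f r → r * deriv f r ≤ β * f r →
      β + ε₀ ≤ (1+(deriv f r)^2)*ε₀ →
      1/r ≤ deriv (fun s => s * deriv f s / f s) r := by
  intro r hr hF hP hq hp0
  have hr0 : (0:ℝ) < r := hr
  set P := deriv f r with hPdef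
  set F := f r with hFdef
  set D2 := deriv (deriv f) r with hD2def
  have hW : 0 < r * P - F := hw r hr0.le
  have hfd : HasDerivAt f P r := (hdf r hr).hasDerivAt
  have hpd : HasDerivAt (deriv f) D2 r := (hdp r hr).hasDerivAt
  have hqd : HasDerivAt (fun s => s * deriv f s / f s)
      (((1 * P + r * D2) * F - r * P * P) / F ^ 2) r :=
    (((hasDerivAt_id r).mul hpd).div hfd hF.ne')
  -- cleared ODE
  have hodes := hode r hr
  have hode2 : r*lam*(r*P - F)*D2 + lam*(r*P - F)*((n:ℝ)-1)*(1+P^2)*P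
      = r*(1+P^2)^2 := by
    have hWne : r * deriv f r - f r ≠ 0 := hW.ne'
    field_simp [hWne] at hodes
    linarith [hodes]
  -- polynomial core inequality
  have c3 : β*P^2 + ((n:ℝ)-1)*P^2*(1+P^2) ≤ (ε₀+((n:ℝ)-1))*(1+P^2)^2 := by
    have h31 := mul_le_mul_of_nonneg_right hp0 (by positivity : (0:ℝ) ≤ 1+P^2)
    have h32 := mul_le_mul_of_nonneg_left
      (show P^2 ≤ 1+P^2 by linarith)
      (mul_nonneg (by linarith : (0:ℝ) ≤ (n:ℝ)-1) (by positivity : (0:ℝ) ≤ 1+P^2))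
    have h33 : (0:ℝ) ≤ β*(1+P^2) - β*P^2 := by nlinarith
    have h34 : (0:ℝ) ≤ ε₀*(1+P^2) := by positivity
    nlinarith [h31, h32, h33, h34]
  have hm1 : F^2 - r*(P*F) ≤ 0 := by nlinarith [mul_nonneg hF.le hW.le]
  have hβ0 : (0:ℝ) < β := by linarith
  have m2b := mul_le_mul_of_nonneg_left
    (show r^2*P^2 + F^2 - r*(P*F) ≤ r^2*P^2 by linarith)
    (mul_nonneg hβ0.le (mul_nonneg hlam0.le hW.le))
  have m3 : β*(r*P - F) ≤ (β-1)*(r*P) := by linarith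
  have m4a := mul_le_mul_of_nonneg_left m3
    (show (0:ℝ) ≤ lam*(r^2*P^2) by positivity)
  have m4b := mul_le_mul_of_nonneg_left m3
    (mul_nonneg hlam0.le (mul_nonneg (by linarith : (0:ℝ) ≤ (n:ℝ)-1) (by positivity : (0:ℝ) ≤ r*(F*((1+P^2)*P)))))
  have m5 := mul_le_mul_of_nonneg_left hq
    (mul_nonneg hlam0.le (mul_nonneg (by linarith : (0:ℝ) ≤ β-1) (by positivity : (0:ℝ) ≤ r^2*P^2)))
  have m7 : lam*(β-1)*((ε₀+((n:ℝ)-1))*(1+P^2)^2) = β*(1+P^2)^2 := by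
    linear_combination (1+P^2)^2 * hc' 
  have m6 := mul_le_mul_of_nonneg_left c3
    (mul_nonneg hlam0.le (by linarith : (0:ℝ) ≤ β-1))
  have m67 : lam*(β-1)*(β*P^2 + ((n:ℝ)-1)*P^2*(1+P^2)) ≤ β*(1+P^2)^2 := by
    calc lam*(β-1)*(β*P^2 + ((n:ℝ)-1)*P^2*(1+P^2))
        ≤ lam*(β-1)*((ε₀+((n:ℝ)-1))*(1+P^2)^2) := m6
      _ = β*(1+P^2)^2 := m7
  have m67s := mul_le_mul_of_nonneg_left m67
    (show (0:ℝ) ≤ F*r^2 by positivity)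
  -- master inequality (multiplied by β)
  have hMβ : 0 ≤ β*(lam*(r*P-F)*(r*(P*F) - r^2*P^2 - F^2) + r^2*F*(1+P^2)^2
      - lam*((n:ℝ)-1)*r*F*(1+P^2)*P*(r*P-F)) := by
    nlinarith [m2b, m4a, m4b, m5, m67s]
  have hM : 0 ≤ lam*(r*P-F)*(r*(P*F) - r^2*P^2 - F^2) + r^2*F*(1+P^2)^2
      - lam*((n:ℝ)-1)*r*F*(1+P^2)*P*(r*P-F) := by
    nlinarith [hMβ, hβ0]
  have hID : lam*(r*P-F)*(r*((1*P + r*D2)*F - r*P*P) - F^2) =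
      lam*(r*P-F)*(r*(P*F) - r^2*P^2 - F^2) + r^2*F*(1+P^2)^2
      - lam*((n:ℝ)-1)*r*F*(1+P^2)*P*(r*P-F) := by
    linear_combination (r*F)*hode2
  have hfin : F^2 ≤ r*((1*P + r*D2)*F - r*P*P) := by
    nlinarith [hM, hID, mul_pos hlam0 hW]
  rw [hqd.deriv, div_le_div_iff₀ hr0 (by positivity)]
  linarith [hfin]

/-- polynomial lower growth bound `f(r) ≥ C r^β` for any
`1 < β < λ(n−1)/(λ(n−1)−1)`. -/
theorem imcf_polynomial_lower_bound (n : ℕ) (hn : 2 ≤ n)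
    (lam mu : ℝ) (hlam : 1 / ((n : ℝ) - 1) < lam) (hmu : mu < 0)
    (f : ℝ → ℝ) (hf : IsIMCFSolGlobal n lam mu f) :
    ∀ β : ℝ, 1 < β → β < lam * ((n : ℝ) - 1) / (lam * ((n : ℝ) - 1) - 1) →
      ∃ C > (0 : ℝ), ∃ R > (0 : ℝ), ∀ r : ℝ, R ≤ r → C * r ^ β ≤ f r := by
  intro β hβ1 hβ2
  have hfull := hf
  obtain ⟨hcf, hcp, hdf, hdp, hcd2, hode, hf0, hp00, hw⟩ := hf
  have hn1 : (1:ℝ) ≤ (n:ℝ) - 1 := by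
    have h2 : (2:ℝ) ≤ (n:ℝ) := by exact_mod_cast hn
    linarith
  have hlam0 : 0 < lam := lt_trans (div_pos one_pos (by linarith)) hlam
  have hX : 1 < lam * ((n:ℝ)-1) := by
    rw [div_lt_iff₀ (by linarith : (0:ℝ) < (n:ℝ)-1)] at hlam
    linarith
  have hβα : β * (lam*((n:ℝ)-1) - 1) < lam*((n:ℝ)-1) := by
    rw [lt_div_iff₀ (by linarith : (0:ℝ) < lam*((n:ℝ)-1)-1)] at hβ2
    exact hβ2
  have hlb : 0 < lam*(β-1) := mul_pos hlam0 (by linarith)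
  set ε₀ := β/(lam*(β-1)) - ((n:ℝ)-1) with hε₀def
  have hε₀pos : 0 < ε₀ := by
    rw [hε₀def, sub_pos, lt_div_iff₀ hlb]
    nlinarith [hβα]
  have hc' : lam*(β-1)*(ε₀+((n:ℝ)-1)) = β := by
    rw [hε₀def, sub_add_cancel, mul_div_cancel₀ _ hlb.ne']
  have hqstep := imcf_q_step n lam f hlam0 hn1 hdf hdp hode hw hβ1 hε₀pos hc'
  have hfp := imcf_fp_pos n lam f hlam0 hcp hdp hode hw hp00 hn1
  obtain ⟨r₄, hr₄0, hr₄⟩ := imcf_fp_unbounded n lam mu f hlam0 hn1 hfull (1 + β/ε₀)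
  have hβε : 0 ≤ β/ε₀ := div_nonneg (by linarith) hε₀pos.le
  have hcond : ∀ r, r₄ ≤ r → β + ε₀ ≤ (1+(deriv f r)^2)*ε₀ := by
    intro r hr
    have hP1 := hr₄ r hr
    have hfld : β/ε₀ * ε₀ = β := div_mul_cancel₀ β hε₀pos.ne'
    have h1 : (1:ℝ) ≤ deriv f r := by linarith
    have h3 : 0 ≤ (deriv f r) * (deriv f r - 1) * ε₀ :=
      mul_nonneg (mul_nonneg (by linarith) (by linarith)) hε₀pos.le
    have h2' : ε₀ + β ≤ deriv f r * ε₀ := by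
      have h4 := mul_le_mul_of_nonneg_right hP1 hε₀pos.le
      rw [add_mul, one_mul, div_mul_cancel₀ β hε₀pos.ne'] at h4
      exact h4
    nlinarith [h2', h3, hε₀pos]
  have hfgrow := aux_grow (g := f) (m := 1) (x := r₄)
    (hcf.mono (Ici_subset_Ici.2 hr₄0.le))
    (fun s hs => hdf s (mem_Ioi.2 (lt_trans hr₄0 hs)))
    (fun s hs => by have := hr₄ s (le_of_lt hs); linarith)
  set r₅ := r₄ + |f r₄| + 1 with hr₅def
  have hr₅0 : 0 < r₅ := by
    have := abs_nonneg (f r₄); linarith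
  have hr₄₅ : r₄ ≤ r₅ := by
    have := abs_nonneg (f r₄); linarith
  have hFpos : ∀ r, r₅ ≤ r → 0 < f r := by
    intro r hr
    have h1 := hfgrow r (le_trans hr₄₅ hr)
    have h2 := neg_abs_le (f r₄)
    have : r₄ + |f r₄| + 1 ≤ r := by rw [hr₅def] at hr; exact hr
    linarith
  have hPpos : ∀ r, r₅ ≤ r → 0 < deriv f r :=
    fun r hr => hfp r (mem_Ioi.2 (lt_of_lt_of_le hr₅0 hr))
  have hqD : ∀ s, r₅ ≤ s → DifferentiableAt ℝ (fun t => t * deriv f t / f t) s := by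
    intro s hs
    have hs0 : 0 < s := lt_of_lt_of_le hr₅0 hs
    exact (differentiableAt_fun_id.mul (hdp s (mem_Ioi.2 hs0))).div
      (hdf s (mem_Ioi.2 hs0)) (hFpos s hs).ne'
  have hqcont : ContinuousOn (fun t => t * deriv f t / f t) (Ici r₅) :=
    (continuousOn_id.mul (hcp.mono (Ici_subset_Ici.2 hr₅0.le))).div
      (hcf.mono (Ici_subset_Ici.2 hr₅0.le)) (fun s hs => (hFpos s hs).ne')
  -- existence of a point where q ≥ β
  have hex : ∃ R₁, r₅ ≤ R₁ ∧ β ≤ R₁ * deriv f R₁ / f R₁ := by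
    by_contra hcon
    push_neg at hcon
    have hmono : MonotoneOn (fun s => s * deriv f s / f s - Real.log s) (Ici r₅) := by
      apply monotoneOn_of_deriv_nonneg (convex_Ici r₅)
      · exact hqcont.sub (Real.continuousOn_log.mono
          (fun s hs => ne_of_gt (lt_of_lt_of_le hr₅0 hs)))
      · intro s hs
        rw [interior_Ici] at hs
        exact ((hqD s hs.le).sub
          (Real.differentiableAt_log (ne_of_gt (lt_trans hr₅0 hs)))).differentiableWithinAt
      · intro s hs
        rw [interior_Ici] at hs
        have hs0 : 0 < s := lt_trans hr₅0 hs
        have hd1 : HasDerivAt (fun t => t*deriv f t/f t - Real.log t)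
            (deriv (fun t => t*deriv f t/f t) s - s⁻¹) s :=
          (hqD s hs.le).hasDerivAt.sub (Real.hasDerivAt_log hs0.ne')
        rw [hd1.deriv]
        have hqle : s * deriv f s ≤ β * f s := by
          have h := hcon s hs.le
          rw [div_lt_iff₀ (hFpos s hs.le)] at h
          linarith
        have hstep := hqstep s (mem_Ioi.2 hs0) (hFpos s hs.le) (hPpos s hs.le) hqle
          (hcond s (le_trans hr₄₅ hs.le))
        rw [one_div] at hstep
        linarith
    set X := r₅ * Real.exp β with hXdef
    have hexp1 : 1 ≤ Real.exp β := Real.one_le_exp (by linarith)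
    have hXge : r₅ ≤ X := by nlinarith
    have hm := hmono self_mem_Ici (mem_Ici.2 hXge) hXge
    simp only [] at hm
    have hlogX : Real.log X = Real.log r₅ + β := by
      rw [hXdef, Real.log_mul hr₅0.ne' (Real.exp_ne_zero β), Real.log_exp]
    have hq5 : 0 < r₅ * deriv f r₅ / f r₅ :=
      div_pos (mul_pos hr₅0 (hPpos r₅ le_rfl)) (hFpos r₅ le_rfl)
    have hcX := hcon X hXge
    rw [hlogX] at hm
    linarith
  obtain ⟨R₁, hR₁5, hR₁q⟩ := hex
  have hR₁0 : 0 < R₁ := lt_of_lt_of_le hr₅0 hR₁5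
  -- q stays ≥ β
  have hqge : ∀ r, R₁ ≤ r → β * f r ≤ r * deriv f r := by
    intro r hr
    rcases eq_or_lt_of_le hr with h | hlt
    · rw [le_div_iff₀ (hFpos R₁ hR₁5)] at hR₁q
      rw [← h]
      linarith
    · have hpos := aux_pos_of_deriv_pos (a := R₁) (b := r) hlt
        ((hqcont.mono (Icc_subset_Ici_self.trans (Ici_subset_Ici.2 hR₁5))).sub
          continuousOn_const)
        (fun s hs => ((hqD s (le_trans hR₁5 hs.1.le)).sub (differentiableAt_const β)))
        (by simp only [Pi.sub_apply, sub_nonneg]; exact hR₁q)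
        ?_
      · have hFr : 0 < f r := hFpos r (le_trans hR₁5 hr)
        simp only [Pi.sub_apply, sub_pos] at hpos
        rw [lt_div_iff₀ hFr] at hpos
        linarith
      · intro s hs hle
        have hs5 : r₅ ≤ s := le_trans hR₁5 hs.1.le
        have hs0 : 0 < s := lt_of_lt_of_le hr₅0 hs5
        have hd1 : HasDerivAt (fun t => t*deriv f t/f t - β)
            (deriv (fun t => t*deriv f t/f t) s - 0) s :=
          (hqD s hs5).hasDerivAt.sub (hasDerivAt_const s β)
        rw [show ((fun t => t*deriv f t/f t) - fun _ => β) = (fun t => t*deriv f t/f t - β) from rfl,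
          hd1.deriv]
        have hqle : s * deriv f s ≤ β * f s := by
          have h2 : s * deriv f s / f s ≤ β := by simp only [Pi.sub_apply] at hle; linarith [hle]
          rw [div_le_iff₀ (hFpos s hs5)] at h2
          linarith
        have hstep := hqstep s (mem_Ioi.2 hs0) (hFpos s hs5) (hPpos s hs5) hqle
          (hcond s (le_trans hr₄₅ hs5))
        have : (0:ℝ) < 1/s := by positivity
        linarith
  -- integrate the inequality
  have hψ : MonotoneOn (fun s => Real.log (f s) - β * Real.log s) (Ici R₁) := by
    apply monotoneOn_of_deriv_nonneg (convex_Ici R₁)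
    · apply ContinuousOn.sub
      · exact ContinuousOn.log (hcf.mono (Ici_subset_Ici.2 hR₁0.le))
          (fun s hs => (hFpos s (le_trans hR₁5 hs)).ne')
      · exact continuousOn_const.mul (Real.continuousOn_log.mono
          (fun s hs => ne_of_gt (lt_of_lt_of_le hR₁0 hs)))
    · intro s hs
      rw [interior_Ici] at hs
      have hs0 : 0 < s := lt_trans hR₁0 hs
      exact (((hdf s (mem_Ioi.2 hs0)).hasDerivAt.log
        (hFpos s (le_trans hR₁5 hs.le)).ne').sub
        ((Real.hasDerivAt_log hs0.ne').const_mul β)).differentiableAt.differentiableWithinAt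
    · intro s hs
      rw [interior_Ici] at hs
      have hs0 : 0 < s := lt_trans hR₁0 hs
      have hFs : 0 < f s := hFpos s (le_trans hR₁5 hs.le)
      have hd1 : HasDerivAt (fun t => Real.log (f t) - β * Real.log t)
          (deriv f s / f s - β * s⁻¹) s :=
        ((hdf s (mem_Ioi.2 hs0)).hasDerivAt.log hFs.ne').sub
          ((Real.hasDerivAt_log hs0.ne').const_mul β)
      rw [hd1.deriv, sub_nonneg]
      have h2 : β * s⁻¹ = β / s := by ring
      rw [h2, div_le_div_iff₀ hs0 hFs]
      have := hqge s hs.le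
      linarith
  set C := f R₁ / R₁ ^ β with hCdef
  have hCpos : 0 < C :=
    div_pos (hFpos R₁ hR₁5) (Real.rpow_pos_of_pos hR₁0 β)
  refine ⟨C, hCpos, R₁, hR₁0, fun r hr => ?_⟩
  have hr0 : 0 < r := lt_of_lt_of_le hR₁0 hr
  have hm := hψ self_mem_Ici (mem_Ici.2 hr) hr
  simp only [] at hm
  have hFr : 0 < f r := hFpos r (le_trans hR₁5 hr)
  have hrp : 0 < r ^ β := Real.rpow_pos_of_pos hr0 β
  rw [← Real.log_le_log_iff (by positivity) hFr]
  rw [Real.log_mul hCpos.ne' hrp.ne', Real.log_rpow hr0, hCdef,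
    Real.log_div (hFpos R₁ hR₁5).ne' (Real.rpow_pos_of_pos hR₁0 β).ne',
    Real.log_rpow hR₁0]
  linarith
end

section
/- Let n ≥ 2, λ > 0, μ < 0. If f: [0,∞) → ℝ solves f'' + ((n-1)/r)(1+f'²)f' = (1/λ)(1+f'²)²/(r f' − f) on (0,∞) with f(0) = μ, f'(0) = 0 and r f'(r) > f(r) for all r ≥ 0, then u(x,t) := e^{λt} f(e^{−λt}|x|) is a solution of the graphical inverse mean curvature flow equation u_t = −√(1+|∇u|²)·(div(∇u/√(1+|∇u|²)))^{−1} on (ℝⁿ \ {0}) × ℝ. -/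
open Set Filter Real

/-- The divergence of a vector field on `ℝⁿ`: `div V (x) = ∑ᵢ ∂ᵢ Vᵢ(x)`. -/
noncomputable def divergence {n : ℕ} (V : EuclideanSpace ℝ (Fin n) → EuclideanSpace ℝ (Fin n))
    (x : EuclideanSpace ℝ (Fin n)) : ℝ :=
  ∑ i : Fin n, fderiv ℝ V x (EuclideanSpace.single i 1) i

variable {E : Type*} [NormedAddCommGroup E] [InnerProductSpace ℝ E] [CompleteSpace E]

lemma hasFDerivAt_norm' {x : E} (hx : x ≠ 0) :
    HasFDerivAt (fun y : E => ‖y‖) (‖x‖⁻¹ • innerSL ℝ x) x := by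
  have hR : (0:ℝ) < ‖x‖ := norm_pos_iff.mpr hx
  have hns : HasFDerivAt (fun y : E => ‖y‖ ^ 2) ((2 : ℕ) • innerSL ℝ x) x :=
    (hasStrictFDerivAt_norm_sq x).hasFDerivAt
  have hsq : HasDerivAt Real.sqrt (1 / (2 * Real.sqrt (‖x‖ ^ 2))) (‖x‖ ^ 2) :=
    Real.hasDerivAt_sqrt (by positivity)
  have h := hsq.comp_hasFDerivAt x hns
  have heq : (Real.sqrt ∘ fun y : E => ‖y‖ ^ 2) = fun y : E => ‖y‖ := by
    funext y; simp [Function.comp, Real.sqrt_sq (norm_nonneg y)]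
  rw [heq] at h
  refine h.congr_fderiv ?_
  rw [Real.sqrt_sq (norm_nonneg x)]
  ext v
  simp only [ContinuousLinearMap.smul_apply, smul_eq_mul, ContinuousLinearMap.coe_smul',
    Pi.smul_apply, nsmul_eq_mul, Nat.cast_ofNat]
  field_simp

lemma grad_radial (f : ℝ → ℝ) (c s : ℝ) (x : E) (hx : x ≠ 0)
    (hdf : DifferentiableAt ℝ f (s * ‖x‖)) :
    gradient (fun z : E => c * f (s * ‖z‖)) x
      = (c * s * deriv f (s * ‖x‖) / ‖x‖) • x := by
  have hR : (0:ℝ) < ‖x‖ := norm_pos_iff.mpr hx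
  have h1 : HasDerivAt (fun ρ : ℝ => c * f (s * ρ)) (c * (deriv f (s * ‖x‖) * (s * 1))) ‖x‖ :=
    ((hdf.hasDerivAt.comp ‖x‖ ((hasDerivAt_id ‖x‖).const_mul s))).const_mul c
  have h2 := h1.comp_hasFDerivAt x (hasFDerivAt_norm' hx)
  have heq : ((fun ρ : ℝ => c * f (s * ρ)) ∘ fun y : E => ‖y‖)
      = fun z : E => c * f (s * ‖z‖) := rfl
  rw [heq] at h2
  apply HasGradientAt.gradient
  rw [hasGradientAt_iff_hasFDerivAt]
  refine h2.congr_fderiv ?_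
  ext v
  simp only [InnerProductSpace.toDual_apply_apply, real_inner_smul_left,
    ContinuousLinearMap.smul_apply, smul_eq_mul, innerSL_apply_apply]
  field_simp

lemma hasDerivAt_quot (f : ℝ → ℝ) (r b : ℝ) (hb : HasDerivAt (deriv f) b r) :
    HasDerivAt (fun ρ => deriv f ρ / Real.sqrt (1 + (deriv f ρ) ^ 2))
      (b / Real.sqrt (1 + (deriv f r) ^ 2) ^ 3) r := by
  have hq : (0:ℝ) < 1 + (deriv f r) ^ 2 := by positivity
  have hS : (0:ℝ) < Real.sqrt (1 + (deriv f r) ^ 2) := Real.sqrt_pos.mpr hq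
  have hS2 : Real.sqrt (1 + (deriv f r) ^ 2) ^ 2 = 1 + (deriv f r) ^ 2 := Real.sq_sqrt hq.le
  have h1 : HasDerivAt (fun ρ => 1 + (deriv f ρ) ^ 2) (2 * deriv f r ^ 1 * b) r := by
    simpa using (hb.pow 2).const_add 1
  have h2 := h1.sqrt hq.ne'
  have h3 := hb.div h2 hS.ne'
  refine h3.congr_deriv ?_
  set S := Real.sqrt (1 + (deriv f r) ^ 2)
  set a := deriv f r
  field_simp
  linear_combination b * hS2

lemma div_radial {n : ℕ} (g : ℝ → ℝ) (s : ℝ) (x : EuclideanSpace ℝ (Fin n)) (hx : x ≠ 0)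
    (G : ℝ) (hg : HasDerivAt g G (s * ‖x‖))
    (V : EuclideanSpace ℝ (Fin n) → EuclideanSpace ℝ (Fin n))
    (hV : ∀ y : EuclideanSpace ℝ (Fin n), y ≠ 0 → V y = (g (s * ‖y‖) / ‖y‖) • y) :
    divergence V x = s * G + ((n : ℝ) - 1) * (g (s * ‖x‖) / ‖x‖) := by
  have hR : (0:ℝ) < ‖x‖ := norm_pos_iff.mpr hx
  -- derivative of the scalar radial profile
  have hk : HasDerivAt (fun ρ : ℝ => g (s * ρ) / ρ)
      ((G * (s * 1) * ‖x‖ - g (s * ‖x‖) * 1) / ‖x‖ ^ 2) ‖x‖ :=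
    (hg.comp ‖x‖ ((hasDerivAt_id ‖x‖).const_mul s)).div (hasDerivAt_id ‖x‖) hR.ne'
  have hh := hk.comp_hasFDerivAt x (hasFDerivAt_norm' hx)
  have heq : ((fun ρ : ℝ => g (s * ρ) / ρ) ∘ fun y : EuclideanSpace ℝ (Fin n) => ‖y‖)
      = fun y : EuclideanSpace ℝ (Fin n) => g (s * ‖y‖) / ‖y‖ := rfl
  rw [heq] at hh
  have hW : HasFDerivAt (fun y : EuclideanSpace ℝ (Fin n) => (g (s * ‖y‖) / ‖y‖) • y)
      ((g (s * ‖x‖) / ‖x‖) • ContinuousLinearMap.id ℝ (EuclideanSpace ℝ (Fin n))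
        + (((G * (s * 1) * ‖x‖ - g (s * ‖x‖) * 1) / ‖x‖ ^ 2) •
            (‖x‖⁻¹ • innerSL ℝ x)).smulRight x) x :=
    hh.smul (hasFDerivAt_id x)
  have hfd : fderiv ℝ V x = fderiv ℝ
      (fun y : EuclideanSpace ℝ (Fin n) => (g (s * ‖y‖) / ‖y‖) • y) x := by
    apply Filter.EventuallyEq.fderiv_eq
    exact Filter.eventuallyEq_of_mem (isOpen_compl_singleton.mem_nhds hx) fun y hy => hV y hy
  have hsum : ∑ i : Fin n, x i * x i = ‖x‖ ^ 2 := by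
    have h1 : ‖x‖ = Real.sqrt (∑ i : Fin n, ‖x i‖ ^ 2) := EuclideanSpace.norm_eq x
    rw [h1, Real.sq_sqrt (by positivity)]
    exact Finset.sum_congr rfl fun i _ => by
      rw [Real.norm_eq_abs, sq_abs, sq]
  rw [divergence, hfd, hW.fderiv]
  simp only [ContinuousLinearMap.add_apply, ContinuousLinearMap.smul_apply,
    ContinuousLinearMap.id_apply, ContinuousLinearMap.smulRight_apply, innerSL_apply_apply,
    PiLp.add_apply, PiLp.smul_apply, smul_eq_mul]
  have hinner : ∀ i : Fin n, (inner ℝ x (EuclideanSpace.single i (1:ℝ)) : ℝ) = x i := by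
    intro i
    rw [EuclideanSpace.inner_single_right]
    simp
  simp only [hinner, EuclideanSpace.single_apply]
  rw [Finset.sum_add_distrib]
  simp only [mul_ite, mul_one, mul_zero, Finset.sum_ite_eq', Finset.mem_univ, if_true]
  rw [Finset.sum_const]
  have hs2 : ∑ i : Fin n, (G * s * ‖x‖ - g (s * ‖x‖)) / ‖x‖ ^ 2 * (‖x‖⁻¹ * x i) * x i
      = (G * s * ‖x‖ - g (s * ‖x‖)) / ‖x‖ ^ 2 * ‖x‖⁻¹ * ‖x‖ ^ 2 := by
    rw [← hsum, Finset.mul_sum]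
    exact Finset.sum_congr rfl fun i _ => by ring
  rw [hs2, Finset.card_univ, Fintype.card_fin, nsmul_eq_mul]
  field_simp
  ring

/-- `u(x,t) = e^{λt} f(e^{−λt}|x|)` is a self-similar solution of the
graphical inverse mean curvature flow equation
`u_t = −√(1+|∇u|²)·(div(∇u/√(1+|∇u|²)))⁻¹` on `(ℝⁿ \ {0}) × ℝ`. -/
theorem imcf_self_similar_solution (n : ℕ) (hn : 2 ≤ n)
    (lam mu : ℝ) (hlam : 0 < lam) (hmu : mu < 0)
    (f : ℝ → ℝ) (hf : IsIMCFSolGlobal n lam mu f)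
    (u : EuclideanSpace ℝ (Fin n) → ℝ → ℝ)
    (hu : ∀ x t, u x t = Real.exp (lam * t) * f (Real.exp (-lam * t) * ‖x‖)) :
    ∀ x : EuclideanSpace ℝ (Fin n), x ≠ 0 → ∀ t : ℝ,
      HasDerivAt (u x)
        (-(Real.sqrt (1 + ‖gradient (fun y => u y t) x‖ ^ 2) *
          (divergence (fun y =>
              (Real.sqrt (1 + ‖gradient (fun z => u z t) y‖ ^ 2))⁻¹ •
                gradient (fun z => u z t) y) x)⁻¹)) t := by

  obtain ⟨-, -, hdf, hdf', -, hode, -, -, hpos⟩ := hf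
  intro x hx t
  have hR : (0:ℝ) < ‖x‖ := norm_pos_iff.mpr hx
  have hs : (0:ℝ) < Real.exp (-lam * t) := Real.exp_pos _
  have hr : (0:ℝ) < Real.exp (-lam * t) * ‖x‖ := mul_pos hs hR
  have hcs : Real.exp (lam * t) * Real.exp (-lam * t) = 1 := by
    rw [← Real.exp_add, show lam * t + -lam * t = 0 by ring, Real.exp_zero]
  -- the gradient of y ↦ u y t
  have hgrad : ∀ y : EuclideanSpace ℝ (Fin n), y ≠ 0 →
      gradient (fun z => u z t) y
        = (deriv f (Real.exp (-lam * t) * ‖y‖) / ‖y‖) • y := by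
    intro y hy
    have h := grad_radial f (Real.exp (lam * t)) (Real.exp (-lam * t)) y hy
      (hdf _ (mul_pos hs (norm_pos_iff.mpr hy)))
    simp only [hu]
    rw [h, hcs, one_mul]
  have hng : ∀ y : EuclideanSpace ℝ (Fin n), y ≠ 0 →
      ‖gradient (fun z => u z t) y‖ ^ 2
        = (deriv f (Real.exp (-lam * t) * ‖y‖)) ^ 2 := by
    intro y hy
    rw [hgrad y hy, norm_smul, mul_pow, Real.norm_eq_abs, sq_abs, div_pow,
      div_mul_cancel₀ _ (pow_ne_zero 2 (norm_ne_zero_iff.mpr hy))]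
  -- V agrees with a radial field away from 0
  have hVW : ∀ y : EuclideanSpace ℝ (Fin n), y ≠ 0 →
      (Real.sqrt (1 + ‖gradient (fun z => u z t) y‖ ^ 2))⁻¹ • gradient (fun z => u z t) y
      = ((fun ρ => deriv f ρ / Real.sqrt (1 + (deriv f ρ) ^ 2))
            (Real.exp (-lam * t) * ‖y‖) / ‖y‖) • y := by
    intro y hy
    rw [hng y hy, hgrad y hy, smul_smul]
    congr 1
    have hSy : Real.sqrt (1 + (deriv f (Real.exp (-lam * t) * ‖y‖)) ^ 2) ≠ 0 :=
      (Real.sqrt_pos.mpr (by positivity)).ne'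
    field_simp
  have hgder : HasDerivAt (fun ρ => deriv f ρ / Real.sqrt (1 + (deriv f ρ) ^ 2))
      (deriv (deriv f) (Real.exp (-lam * t) * ‖x‖) /
        Real.sqrt (1 + (deriv f (Real.exp (-lam * t) * ‖x‖)) ^ 2) ^ 3)
      (Real.exp (-lam * t) * ‖x‖) :=
    hasDerivAt_quot f _ _ (hdf' _ hr).hasDerivAt
  have hdiv : divergence (fun y =>
        (Real.sqrt (1 + ‖gradient (fun z => u z t) y‖ ^ 2))⁻¹ •
          gradient (fun z => u z t) y) x
      = Real.exp (-lam * t) * (deriv (deriv f) (Real.exp (-lam * t) * ‖x‖) /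
          Real.sqrt (1 + (deriv f (Real.exp (-lam * t) * ‖x‖)) ^ 2) ^ 3)
        + ((n : ℝ) - 1) * ((deriv f (Real.exp (-lam * t) * ‖x‖) /
            Real.sqrt (1 + (deriv f (Real.exp (-lam * t) * ‖x‖)) ^ 2)) / ‖x‖) :=
    div_radial _ _ x hx _ hgder _ hVW
  -- time derivative
  have hi : HasDerivAt (fun τ => Real.exp (-lam * τ) * ‖x‖)
      (Real.exp (-lam * t) * (-lam * 1) * ‖x‖) t :=
    (((hasDerivAt_id t).const_mul (-lam)).exp).mul_const ‖x‖
  have hF : HasDerivAt (fun τ => f (Real.exp (-lam * τ) * ‖x‖))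
      (deriv f (Real.exp (-lam * t) * ‖x‖) * (Real.exp (-lam * t) * (-lam * 1) * ‖x‖)) t :=
    (hdf _ hr).hasDerivAt.comp t hi
  have hE : HasDerivAt (fun τ => Real.exp (lam * τ)) (Real.exp (lam * t) * (lam * 1)) t :=
    ((hasDerivAt_id t).const_mul lam).exp
  have hto := hE.mul hF
  refine HasDerivAt.congr_of_eventuallyEq ?_ (Filter.Eventually.of_forall fun τ => hu x τ)
  rw [hng x hx, hdiv]
  refine hto.congr_deriv ?_
  -- now pure algebra
  have hOde := hode (Real.exp (-lam * t) * ‖x‖) hr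
  have hDnm := hpos (Real.exp (-lam * t) * ‖x‖) hr.le
  set R := ‖x‖ with hRdef
  set s := Real.exp (-lam * t) with hsdef
  set c := Real.exp (lam * t) with hcdef
  set a := deriv f (s * R) with hadef
  set b := deriv (deriv f) (s * R) with hbdef
  set fr := f (s * R) with hfrdef
  have hq : (0:ℝ) < 1 + a ^ 2 := by positivity
  have hS2 : Real.sqrt (1 + a ^ 2) ^ 2 = 1 + a ^ 2 := Real.sq_sqrt hq.le
  have hSpos : (0:ℝ) < Real.sqrt (1 + a ^ 2) := Real.sqrt_pos.mpr hq
  set S := Real.sqrt (1 + a ^ 2) with hSdef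
  have hDIV : s * (b / S ^ 3) + ((n : ℝ) - 1) * ((a / S) / R)
      = s * S / (lam * ((s * R) * a - fr)) := by
    have hb : b = 1 / lam * (1 + a ^ 2) ^ 2 / ((s * R) * a - fr)
        - ((n : ℝ) - 1) / (s * R) * (1 + a ^ 2) * a := by
      have := hOde
      linarith
    rw [hb, ← hS2]
    have h1 : S ≠ 0 := hSpos.ne'
    have h2 : R ≠ 0 := hR.ne'
    have h3 : s ≠ 0 := hs.ne'
    have h4 : lam ≠ 0 := hlam.ne'
    have h5 : (s * R) * a - fr ≠ 0 := by
      have := hDnm; intro h; rw [mul_comm s R] at this; nlinarith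
    field_simp
    ring
  rw [hDIV]
  have hc' : c = s⁻¹ := eq_inv_of_mul_eq_one_left hcs
  have h1 : S ≠ 0 := hSpos.ne'
  have h3 : s ≠ 0 := hs.ne'
  have h4 : lam ≠ 0 := hlam.ne'
  have h5 : (s * R) * a - fr ≠ 0 := by
    have := hDnm; intro h; rw [mul_comm s R] at this; nlinarith
  rw [hc']
  field_simp
  ring
end
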